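/- Let F: ℝⁿ ⇉ ℝᵐ be a set-valued mapping with closed graph and (x̄,ȳ) ∈ gph F. Then rg[F](x̄,ȳ) ≥ inf{ ‖v‖ : v ∈ DF(x̄,ȳ)(u) for some u with ‖u‖ = 1 }. -/
import Mathlib


open Filter Topology Set ENNReal NNReal

noncomputable section

variable {E Y : Type*} [NormedAddCommGroup E] [NormedSpace ℝ E]
  [NormedAddCommGroup Y] [NormedSpace ℝ Y]

/-- The tangent (Bouligand) cone to `A` at `x`:
`T_A(x) := {u : ∃ uᵢ → u, tᵢ ↓ 0 with x + tᵢ uᵢ ∈ A}`. -/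
def tangentConeB (A : Set E) (x : E) : Set E :=
  {u | ∃ (t : ℕ → ℝ) (c : ℕ → E), (∀ i, 0 < t i) ∧ Tendsto t atTop (𝓝 0) ∧
    Tendsto c atTop (𝓝 u) ∧ ∀ i, x + t i • c i ∈ A}

/-- The Fréchet normal cone to `A` at `x` (empty outside `A`):
the polar of the tangent cone. -/
def frechetNC (A : Set E) (x : E) : Set (E →L[ℝ] ℝ) :=
  {p | x ∈ A ∧ ∀ u ∈ tangentConeB A x, p u ≤ 0}

/-- The limiting normal cone to `A` at `x`. -/
def limitingNC (A : Set E) (x : E) : Set (E →L[ℝ] ℝ) :=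
  {p | ∃ (xs : ℕ → E) (ps : ℕ → E →L[ℝ] ℝ),
    Tendsto xs atTop (𝓝 x) ∧ Tendsto ps atTop (𝓝 p) ∧
    ∀ i, ps i ∈ frechetNC A (xs i)}

/-- The directional limiting normal cone to `A` at `x` in the direction `u`. -/
def dirLimitingNC (A : Set E) (x u : E) : Set (E →L[ℝ] ℝ) :=
  {p | ∃ (t : ℕ → ℝ) (us : ℕ → E) (ps : ℕ → (E →L[ℝ] ℝ)),
    (∀ i, 0 < t i) ∧ Tendsto t atTop (𝓝 0) ∧ Tendsto us atTop (𝓝 u) ∧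
    Tendsto ps atTop (𝓝 p) ∧ ∀ i, ps i ∈ frechetNC A (x + t i • us i)}

/-- `A` is directionally regular at `x` in the direction `u`. -/
def DirRegularAt (A : Set E) (x u : E) : Prop :=
  dirLimitingNC A x u =
    {p | ∀ (t : ℕ → ℝ), (∀ i, 0 < t i) → Tendsto t atTop (𝓝 0) →
      ∃ (us : ℕ → E) (ps : ℕ → (E →L[ℝ] ℝ)), Tendsto us atTop (𝓝 u) ∧
        Tendsto ps atTop (𝓝 p) ∧ ∀ i, ps i ∈ frechetNC A (x + t i • us i)}

/-- `A` is directionally regular at `x` (in all directions). -/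
def DirRegular (A : Set E) (x : E) : Prop := ∀ u, DirRegularAt A x u

/-- The pair `(u*, v*)` viewed as a linear functional on `E × Y`. -/
def pairFun (us : E →L[ℝ] ℝ) (vs : Y →L[ℝ] ℝ) : (E × Y) →L[ℝ] ℝ :=
  us.coprod vs

/-- The primal-dual derivative of the mapping with graph `G` at `z ∈ G`:
`D̂F(xb,yb)(u,v*) := {(u*,v) : (u*,−v*) ∈ N̄_{gph F}((xb,yb);(u,v))}`. -/
def pdDeriv (G : Set (E × Y)) (z : E × Y) (u : E) (vs : Y →L[ℝ] ℝ) :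
    Set ((E →L[ℝ] ℝ) × Y) :=
  {w | pairFun w.1 (-vs) ∈ dirLimitingNC G z (u, w.2)}

/-- `rg[F](xb,yb)`. -/
def rgL (G : Set (E × Y)) (z : E × Y) : ℝ≥0∞ :=
  ⨅ (u : E) (vs : Y →L[ℝ] ℝ) (w : (E →L[ℝ] ℝ) × Y) (_ : ‖u‖ = 1)
    (_ : ‖vs‖ = 1) (_ : w ∈ pdDeriv G z u vs),
    ENNReal.ofReal (max ‖w.1‖ ‖w.2‖)

/-- `rg⋄[F](xb,yb)`. -/
def rgDiamond (G : Set (E × Y)) (z : E × Y) : ℝ≥0∞ :=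
  ⨅ (u : E) (vs : Y →L[ℝ] ℝ) (w : (E →L[ℝ] ℝ) × Y) (_ : ‖u‖ = 1)
    (_ : ‖vs‖ = 1) (_ : w ∈ pdDeriv G z u vs) (_ : w.1 u = vs w.2),
    ENNReal.ofReal (max ‖w.1‖ ‖w.2‖)

/-- `rg°[F](xb,yb)`. -/
def rgCirc (G : Set (E × Y)) (z : E × Y) : ℝ≥0∞ :=
  ⨅ (u : E) (vs : Y →L[ℝ] ℝ) (B : E →L[ℝ] Y) (_ : ‖u‖ = 1) (_ : ‖vs‖ = 1)
    (_ : (vs.comp B, B u) ∈ pdDeriv G z u vs),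
    ENNReal.ofReal ‖B‖

/-- `r̂g[F](xb,yb)`. -/
def rgHat (G : Set (E × Y)) (z : E × Y) : ℝ≥0∞ :=
  ⨅ (u : E) (vs : Y →L[ℝ] ℝ) (w : (E →L[ℝ] ℝ) × Y) (_ : ‖u‖ = 1)
    (_ : ‖vs‖ = 1) (_ : w ∈ pdDeriv G z u vs),
    ENNReal.ofReal (‖w.1‖ + ‖w.2‖)

/-- `rg†[F](xb,yb)` (intended for the Euclidean setting). -/
def rgDagger (G : Set (E × Y)) (z : E × Y) : ℝ≥0∞ :=
  ⨅ (u : E) (vs : Y →L[ℝ] ℝ) (w : (E →L[ℝ] ℝ) × Y) (_ : ‖u‖ = 1)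
    (_ : ‖vs‖ = 1) (_ : w ∈ pdDeriv G z u vs) (_ : w.1 u = vs w.2),
    ENNReal.ofReal (Real.sqrt (‖w.1‖ ^ 2 + ‖w.2‖ ^ 2 - (w.1 u) ^ 2))

/-- Metric subregularity at `xb` for `yb` of the mapping with graph `G`. -/
def MetricSubregAt (G : Set (E × Y)) (xb : E) (yb : Y) : Prop :=
  (xb, yb) ∈ G ∧ ∃ κ : ℝ≥0, ∃ U ∈ 𝓝 xb, ∀ x ∈ U,
    EMetric.infEdist x {x' | (x', yb) ∈ G} ≤
      (κ : ℝ≥0∞) * EMetric.infEdist yb {y | (x, y) ∈ G}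

/-- The graph of `F + h`, where `G` is the graph of `F`. -/
def sumGraph (G : Set (E × Y)) (h : E → Y) : Set (E × Y) :=
  {p | (p.1, p.2 - h p.1) ∈ G}

/-- `h` is Lipschitz continuous around `xb`. -/
def LipschitzAround (h : E → Y) (xb : E) : Prop :=
  ∃ K : ℝ≥0, ∃ U ∈ 𝓝 xb, LipschitzOnWith K h U

/-- The Lipschitz modulus `lip(h;xb)`. -/
def lipMod (h : E → Y) (xb : E) : ℝ≥0∞ :=
  Filter.limsup (fun p : E × E => ENNReal.ofReal (‖h p.1 - h p.2‖ / ‖p.1 - p.2‖))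
    ((𝓝 xb ×ˢ 𝓝 xb) ⊓ 𝓟 {p : E × E | p.1 ≠ p.2})

/-- The radius of metric subregularity w.r.t. Lipschitz perturbations. -/
def radLip (G : Set (E × Y)) (xb : E) (yb : Y) : ℝ≥0∞ :=
  ⨅ (h : E → Y) (_ : LipschitzAround h xb) (_ : h xb = 0)
    (_ : ¬ MetricSubregAt (sumGraph G h) xb yb), lipMod h xb

/-- The Clarke generalized Jacobian of `h` at `x`. -/
def clarkeJac (h : E → Y) (x : E) : Set (E →L[ℝ] Y) :=
  convexHull ℝ {B | ∃ xs : ℕ → E, Tendsto xs atTop (𝓝 x) ∧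
    (∀ i, DifferentiableAt ℝ h (xs i)) ∧
    Tendsto (fun i => fderiv ℝ h (xs i)) atTop (𝓝 B)}

/-- `h` is semismooth at `xb`. -/
def SemismoothAt (h : E → Y) (xb : E) : Prop :=
  LipschitzAround h xb ∧
  ∀ u : E, ∃ L : Y, ∀ (t : ℕ → ℝ) (us : ℕ → E) (V : ℕ → E →L[ℝ] Y),
    (∀ i, 0 < t i) → Tendsto t atTop (𝓝 0) → Tendsto us atTop (𝓝 u) →
    (∀ i, V i ∈ clarkeJac h (xb + t i • us i)) →
    Tendsto (fun i => V i (us i)) atTop (𝓝 L)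

/-- `h` is continuously differentiable around `xb`. -/
def C1Around (h : E → Y) (xb : E) : Prop :=
  ∃ U ∈ 𝓝 xb, ContDiffOn ℝ 1 h U

/-- The radius of metric subregularity w.r.t. semismooth perturbations. -/
def radSS (G : Set (E × Y)) (xb : E) (yb : Y) : ℝ≥0∞ :=
  ⨅ (h : E → Y) (_ : SemismoothAt h xb) (_ : h xb = 0)
    (_ : ¬ MetricSubregAt (sumGraph G h) xb yb), lipMod h xb

/-- The radius of metric subregularity w.r.t. `C¹` perturbations. -/
def radC1 (G : Set (E × Y)) (xb : E) (yb : Y) : ℝ≥0∞ :=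
  ⨅ (h : E → Y) (_ : C1Around h xb) (_ : h xb = 0)
    (_ : ¬ MetricSubregAt (sumGraph G h) xb yb), lipMod h xb


/-- `rg[F](xb,yb) ≥ inf{‖v‖ : v ∈ DF(xb,yb)(u), ‖u‖ = 1}`. -/
theorem statement5 [FiniteDimensional ℝ E] [FiniteDimensional ℝ Y]
    (G : Set (E × Y)) (hG : IsClosed G) (xb : E) (yb : Y) (hz : (xb, yb) ∈ G) :
    (⨅ (u : E) (v : Y) (_ : ‖u‖ = 1) (_ : (u, v) ∈ tangentConeB G (xb, yb)),
      ENNReal.ofReal ‖v‖) ≤ rgL G (xb, yb) := by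
  refine le_iInf fun u => le_iInf fun vs => le_iInf fun w => le_iInf fun hu =>
    le_iInf fun hvs => le_iInf fun hw => ?_
  obtain ⟨t, us, ps, ht, ht0, hus, hps, hmem⟩ := hw
  have htan : (u, w.2) ∈ tangentConeB G (xb, yb) :=
    ⟨t, us, ht, ht0, hus, fun i => (hmem i).1⟩
  calc (⨅ (u : E) (v : Y) (_ : ‖u‖ = 1) (_ : (u, v) ∈ tangentConeB G (xb, yb)),
      ENNReal.ofReal ‖v‖) ≤ ENNReal.ofReal ‖w.2‖ := by
        refine iInf_le_of_le u (iInf_le_of_le w.2 ?_)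
        exact iInf_le_of_le hu (iInf_le_of_le htan le_rfl)
    _ ≤ ENNReal.ofReal (max ‖w.1‖ ‖w.2‖) :=
        ENNReal.ofReal_le_ofReal (le_max_right _ _)

end
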